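/- arXiv:0804.0991 — 3 statements merged into one kernel-verified Lean document; each statement's English description precedes it below -/
import Mathlib

section
/- Let S be a measurable space, K : S × S → ℝ a bounded symmetric measurable kernel, and F, G probability measures on S. Then the quadratic distance satisfies d_K(F,G) = ∬ K_{cen(G)}(x,y) dF(x) dF(y). -/
open MeasureTheory

/-- The quadratic distance `d_K(F,G) = K(F,F) - 2K(F,G) + K(G,G)` generated by a
symmetric kernel `K`, where `K(A,B) = ∬ K(s,t) dA(s) dB(t)`. -/
noncomputable def quadDist {S : Type*} [MeasurableSpace S] (K : S → S → ℝ)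
    (F G : Measure S) : ℝ :=
  (∫ s, ∫ t, K s t ∂F ∂F) - 2 * (∫ s, ∫ t, K s t ∂G ∂F) + ∫ s, ∫ t, K s t ∂G ∂G

/-- The `G`-centered kernel
`K_cen(x,y) = K(x,y) - K(x,G) - K(G,y) + K(G,G)`. -/
noncomputable def centeredKernel {S : Type*} [MeasurableSpace S] (K : S → S → ℝ)
    (G : Measure S) (x y : S) : ℝ :=
  K x y - (∫ t, K x t ∂G) - (∫ s, K s y ∂G) + ∫ s, ∫ t, K s t ∂G ∂G

/-- the quadratic distance equals the double `F`-integral of the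
`G`-centered kernel: `d_K(F,G) = ∬ K_{cen(G)}(x,y) dF(x) dF(y)`. -/
theorem quadDist_eq_integral_centeredKernel {S : Type*} [MeasurableSpace S]
    (K : S → S → ℝ)
    (hKmeas : Measurable (Function.uncurry K))
    (hKsymm : ∀ x y, K x y = K y x)
    (hKbdd : ∃ C, ∀ x y, |K x y| ≤ C)
    (F G : Measure S) [IsProbabilityMeasure F] [IsProbabilityMeasure G] :
    quadDist K F G = ∫ x, ∫ y, centeredKernel K G x y ∂F ∂F := by
  obtain ⟨C, hC⟩ := hKbdd
  replace hC : ∀ x y, |K x y| ≤ |C| := fun x y => (hC x y).trans (le_abs_self C)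
  -- basic measurability
  have hmeas1 : ∀ x : S, Measurable (K x) := fun x =>
    hKmeas.comp (measurable_prodMk_left)
  have hmeas2 : ∀ y : S, Measurable (fun x => K x y) := fun y =>
    hKmeas.comp (measurable_prodMk_right)
  -- integrability of K x · against a probability measure
  have hint : ∀ (μ : Measure S) [IsProbabilityMeasure μ] (x : S),
      Integrable (K x) μ := by
    intro μ _ x
    exact (integrable_const |C|).mono' (hmeas1 x).aestronglyMeasurable
      (Filter.Eventually.of_forall fun y => by
        simpa [Real.norm_eq_abs] using hC x y)
  have hint' : ∀ (μ : Measure S) [IsProbabilityMeasure μ] (y : S),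
      Integrable (fun x => K x y) μ := by
    intro μ _ y
    exact (integrable_const |C|).mono' (hmeas2 y).aestronglyMeasurable
      (Filter.Eventually.of_forall fun x => by
        simpa [Real.norm_eq_abs] using hC x y)
  -- measurability and integrability of the marginal integrals
  have hmeasA : ∀ (μ : Measure S) [SFinite μ],
      StronglyMeasurable (fun x => ∫ t, K x t ∂μ) := by
    intro μ _
    exact hKmeas.stronglyMeasurable.integral_prod_right'
  have hbddA : ∀ (μ : Measure S) [IsProbabilityMeasure μ] (x : S),
      |∫ t, K x t ∂μ| ≤ |C| := by
    intro μ _ x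
    calc |∫ t, K x t ∂μ| ≤ ∫ t, |K x t| ∂μ := by
          simpa [Real.norm_eq_abs] using norm_integral_le_integral_norm (K x) (μ := μ)
      _ ≤ ∫ _t, |C| ∂μ := integral_mono ((hint μ x).abs) (integrable_const _)
          (fun t => hC x t)
      _ = |C| := by simp
  have hintA : ∀ (μ ν : Measure S) [IsProbabilityMeasure μ] [IsProbabilityMeasure ν],
      Integrable (fun x => ∫ t, K x t ∂μ) ν := by
    intro μ ν _ _
    exact (integrable_const |C|).mono' (hmeasA μ).aestronglyMeasurable
      (Filter.Eventually.of_forall fun x => by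
        simpa [Real.norm_eq_abs] using hbddA μ x)
  -- rewrite ∫ s, K s y using symmetry
  have hsymm_int : ∀ (μ : Measure S) (y : S), (∫ s, K s y ∂μ) = ∫ s, K y s ∂μ := by
    intro μ y
    exact integral_congr_ae (Filter.Eventually.of_forall fun s => hKsymm s y)
  -- compute inner integral
  have hinner : ∀ x : S, (∫ y, centeredKernel K G x y ∂F) =
      (∫ y, K x y ∂F) - (∫ t, K x t ∂G) - (∫ y, ∫ s, K y s ∂G ∂F)
        + ∫ s, ∫ t, K s t ∂G ∂G := by
    intro x
    have h1 : Integrable (K x) F := hint F x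
    have h2 : Integrable (fun _y : S => ∫ t, K x t ∂G) F := integrable_const _
    have h3 : Integrable (fun y => ∫ s, K s y ∂G) F := by
      have := hintA G F
      refine this.congr (Filter.Eventually.of_forall fun y => ?_)
      exact (hsymm_int G y).symm
    have h12 : Integrable (fun y => K x y - ∫ t, K x t ∂G) F := h1.sub h2
    have h123 : Integrable
        (fun y => K x y - (∫ t, K x t ∂G) - ∫ s, K s y ∂G) F := h12.sub h3
    unfold centeredKernel
    rw [integral_add h123 (integrable_const _),
        integral_sub h12 h3, integral_sub h1 h2]
    simp only [integral_const, measure_univ, probReal_univ, ENNReal.toReal_one, one_smul, smul_eq_mul]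
    have hs : (∫ y, ∫ s, K s y ∂G ∂F) = ∫ y, ∫ s, K y s ∂G ∂F :=
      integral_congr_ae (Filter.Eventually.of_forall fun y => hsymm_int G y)
    rw [hs]
    ring
  -- compute outer integral
  have hF1 : Integrable (fun x => ∫ y, K x y ∂F) F := hintA F F
  have hF2 : Integrable (fun x => ∫ t, K x t ∂G) F := hintA G F
  have hF3 : Integrable (fun _x : S => ∫ y, ∫ s, K y s ∂G ∂F) F := integrable_const _
  calc quadDist K F G
      = ∫ x, ((∫ y, K x y ∂F) - (∫ t, K x t ∂G) - (∫ y, ∫ s, K y s ∂G ∂F)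
          + ∫ s, ∫ t, K s t ∂G ∂G) ∂F := by
        have hF12 : Integrable
            (fun x => (∫ y, K x y ∂F) - ∫ t, K x t ∂G) F := hF1.sub hF2
        have hF123 : Integrable (fun x => (∫ y, K x y ∂F) - (∫ t, K x t ∂G)
            - ∫ y, ∫ s, K y s ∂G ∂F) F := hF12.sub hF3
        rw [integral_add hF123 (integrable_const _),
            integral_sub hF12 hF3, integral_sub hF1 hF2]
        simp only [integral_const, measure_univ, probReal_univ, ENNReal.toReal_one, one_smul, smul_eq_mul]
        unfold quadDist
        ring
    _ = ∫ x, ∫ y, centeredKernel K G x y ∂F ∂F :=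
        integral_congr_ae (Filter.Eventually.of_forall fun x => (hinner x).symm)
end

section
/- Let S be a measurable space, G a probability measure on S, p a positive integer, and u : S → ℝ^p a measurable function with each component in L²(G). Let u*(x) = (1, u(x)ᵀ)ᵀ ∈ ℝ^{p+1}, suppose the extended information matrix J* = ∫ u*(x) u*(x)ᵀ dG(x) is invertible, and set P*(x,y) = u*(x)ᵀ (J*)^{−1} u*(y). Let K : S × S → ℝ be a bounded symmetric measurable kernel and define the score-centered kernel K_{scen}(x,y) = K(x,y) − ∫ P*(x,z) K(z,y) dG(z) − ∫ K(x,z) P*(z,y) dG(z) + ∬ P*(x,z) K(z,w) P*(w,y) dG(z) dG(w). Then for every x ∈ S, ∫ K_{scen}(x,y) u*(y) dG(y) = 0 ∈ ℝ^{p+1}. -/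
open MeasureTheory

/-- L²·L² is integrable (Cauchy–Schwarz / Hölder). -/
private lemma memL2_mul_integrable {S : Type*} [MeasurableSpace S] {G : Measure S}
    {f g : S → ℝ} (hf : MemLp f 2 G) (hg : MemLp g 2 G) :
    Integrable (fun x => f x * g x) G := by
  have h : (1 : ENNReal) / 1 = 1 / 2 + 1 / 2 := by
    rw [ENNReal.div_add_div_same, div_one, one_add_one_eq_two]
    exact (ENNReal.div_self (by norm_num : (2 : ENNReal) ≠ 0) (by norm_num : (2 : ENNReal) ≠ ⊤)).symm
  have h2 := hg.smul (r := 1) hf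
  rw [← memLp_one_iff_integrable]
  exact h2

/-- The extended score vector `u*(x) = (1, u(x)ᵀ)ᵀ ∈ ℝ^{p+1}`. -/
noncomputable def extScore {S : Type*} {p : ℕ} (u : S → Fin p → ℝ) (x : S) :
    Fin (p + 1) → ℝ :=
  Fin.cons 1 (u x)

/-- The projection kernel `P*(x,y) = u*(x)ᵀ (J*)⁻¹ u*(y)` onto the extended score space. -/
noncomputable def scoreProjKernel {S : Type*} {p : ℕ} (u : S → Fin p → ℝ)
    (Jstar : Matrix (Fin (p + 1)) (Fin (p + 1)) ℝ) (x y : S) : ℝ :=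
  ∑ i, ∑ j, extScore u x i * Jstar⁻¹ i j * extScore u y j

/-- The score-centered kernel `K_scen = (I - P*) K (I - P*)`. -/
noncomputable def scoreCenteredKernel {S : Type*} [MeasurableSpace S] {p : ℕ}
    (G : Measure S) (u : S → Fin p → ℝ)
    (Jstar : Matrix (Fin (p + 1)) (Fin (p + 1)) ℝ) (K : S → S → ℝ) (x y : S) : ℝ :=
  K x y - (∫ z, scoreProjKernel u Jstar x z * K z y ∂G)
    - (∫ z, K x z * scoreProjKernel u Jstar z y ∂G)
    + ∫ z, ∫ w, scoreProjKernel u Jstar x z * K z w * scoreProjKernel u Jstar w y ∂G ∂G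

/-- the score-centered kernel is `G`-orthogonal to the extended scores:
`∫ K_scen(x,y) u*(y) dG(y) = 0 ∈ ℝ^{p+1}` (componentwise) for every `x`. -/
theorem scoreCenteredKernel_orthogonal {S : Type*} [MeasurableSpace S]
    (G : Measure S) [IsProbabilityMeasure G]
    (p : ℕ) (hp : 0 < p) (u : S → Fin p → ℝ)
    (humeas : ∀ i, Measurable fun x => u x i)
    (huL2 : ∀ i, MemLp (fun x => u x i) 2 G)
    (K : S → S → ℝ)
    (hKmeas : Measurable (Function.uncurry K))
    (hKsymm : ∀ x y, K x y = K y x)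
    (hKbdd : ∃ C, ∀ x y, |K x y| ≤ C)
    (Jstar : Matrix (Fin (p + 1)) (Fin (p + 1)) ℝ)
    (hJ : ∀ i j, Jstar i j = ∫ x, extScore u x i * extScore u x j ∂G)
    (hJinv : IsUnit Jstar.det) :
    ∀ x : S, ∀ i : Fin (p + 1),
      ∫ y, scoreCenteredKernel G u Jstar K x y * extScore u y i ∂G = 0 := by
  obtain ⟨C0, hC0⟩ := hKbdd
  set C := |C0| with hCdef
  have hC : ∀ a b : S, |K a b| ≤ C := fun a b => (hC0 a b).trans (le_abs_self C0)
  have hCnorm : ∀ a b : S, ‖K a b‖ ≤ C := fun a b => by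
    simpa [Real.norm_eq_abs] using hC a b
  intro x i
  -- basic facts about the extended score components
  have heM : ∀ a : Fin (p + 1), Measurable (fun y => extScore u y a) := by
    intro a
    refine Fin.cases ?_ ?_ a
    · simpa [extScore] using (measurable_const : Measurable fun _ : S => (1 : ℝ))
    · intro j; simpa [extScore] using humeas j
  have heL2 : ∀ a : Fin (p + 1), MemLp (fun y => extScore u y a) 2 G := by
    intro a
    refine Fin.cases ?_ ?_ a
    · simpa [extScore] using (memLp_const (1 : ℝ) : MemLp (fun _ : S => (1 : ℝ)) 2 G)
    · intro j; simpa [extScore] using huL2 j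
  have heInt : ∀ a, Integrable (fun y => extScore u y a) G := fun a =>
    (heL2 a).integrable one_le_two
  have hee : ∀ a b, Integrable (fun y => extScore u y a * extScore u y b) G := fun a b =>
    memL2_mul_integrable (heL2 a) (heL2 b)
  -- key algebraic collapse using J⁻¹ J = 1
  have hcollapse : ∀ (t : Fin (p + 1) → ℝ) (a : Fin (p + 1)),
      ∑ b, ∑ c, t b * Jstar⁻¹ b c * Jstar c a = t a := by
    intro t a
    have hinv : Jstar⁻¹ * Jstar = 1 := Matrix.nonsing_inv_mul Jstar hJinv
    calc ∑ b, ∑ c, t b * Jstar⁻¹ b c * Jstar c a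
        = ∑ b, t b * (Jstar⁻¹ * Jstar) b a := by
          refine Finset.sum_congr rfl fun b _ => ?_
          rw [Matrix.mul_apply, Finset.mul_sum]
          exact Finset.sum_congr rfl fun c _ => by ring
      _ = t a := by rw [hinv]; simp [Matrix.one_apply]
  -- rearrangement of the integrand appearing in the key computation
  have hrearr : ∀ (t : Fin (p + 1) → ℝ) (a : Fin (p + 1)),
      (fun y => (∑ b, ∑ c, t b * Jstar⁻¹ b c * extScore u y c) * extScore u y a)
        = fun y => ∑ b, ∑ c, t b * Jstar⁻¹ b c * (extScore u y c * extScore u y a) := by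
    intro t a; funext y
    rw [Finset.sum_mul]
    refine Finset.sum_congr rfl fun b _ => ?_
    rw [Finset.sum_mul]
    exact Finset.sum_congr rfl fun c _ => by ring
  have hkeyInt : ∀ (t : Fin (p + 1) → ℝ) (a : Fin (p + 1)),
      Integrable (fun y => (∑ b, ∑ c, t b * Jstar⁻¹ b c * extScore u y c)
        * extScore u y a) G := by
    intro t a
    rw [hrearr t a]
    exact integrable_finset_sum _ fun b _ =>
      integrable_finset_sum _ fun c _ => (hee c a).const_mul _
  have hkey : ∀ (t : Fin (p + 1) → ℝ) (a : Fin (p + 1)),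
      ∫ y, (∑ b, ∑ c, t b * Jstar⁻¹ b c * extScore u y c) * extScore u y a ∂G = t a := by
    intro t a
    rw [hrearr t a,
      integral_finset_sum _ (fun b _ =>
        integrable_finset_sum _ fun c _ => (hee c a).const_mul _)]
    calc ∑ b, ∫ y, ∑ c, t b * Jstar⁻¹ b c * (extScore u y c * extScore u y a) ∂G
        = ∑ b, ∑ c, t b * Jstar⁻¹ b c * Jstar c a := by
          refine Finset.sum_congr rfl fun b _ => ?_
          rw [integral_finset_sum _ (fun c _ => (hee c a).const_mul _)]
          refine Finset.sum_congr rfl fun c _ => ?_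
          rw [integral_const_mul, ← hJ c a]
      _ = t a := hcollapse t a
  -- integrability of sections of K times score components
  have hKf : ∀ z0 : S, Measurable (fun w => K z0 w) := fun z0 =>
    hKmeas.comp measurable_prodMk_left
  have hKe : ∀ (z0 : S) (b : Fin (p + 1)),
      Integrable (fun w => K z0 w * extScore u w b) G := fun z0 b =>
    Integrable.bdd_mul (heInt b) (hKf z0).aestronglyMeasurable (Filter.Eventually.of_forall fun w => hCnorm z0 w)
  have IA : Integrable (fun y => K x y * extScore u y i) G := hKe x i
  -- φ b z := ∫ w, K z w * e b w : bounded and measurable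
  have hφM : ∀ b : Fin (p + 1),
      AEStronglyMeasurable (fun z => ∫ w, K z w * extScore u w b ∂G) G := by
    intro b
    have hm : StronglyMeasurable (fun q : S × S => K q.1 q.2 * extScore u q.2 b) :=
      (hKmeas.mul ((heM b).comp measurable_snd)).stronglyMeasurable
    exact hm.integral_prod_right'.aestronglyMeasurable
  have hφbd : ∀ (b : Fin (p + 1)) (z0 : S),
      ‖∫ w, K z0 w * extScore u w b ∂G‖ ≤ C * ∫ w, ‖extScore u w b‖ ∂G := by
    intro b z0
    calc ‖∫ w, K z0 w * extScore u w b ∂G‖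
        ≤ ∫ w, ‖K z0 w * extScore u w b‖ ∂G := norm_integral_le_integral_norm _
      _ ≤ ∫ w, C * ‖extScore u w b‖ ∂G := by
          refine integral_mono (hKe z0 b).norm ((heInt b).norm.const_mul C) fun w => ?_
          rw [norm_mul]
          exact mul_le_mul_of_nonneg_right (hCnorm z0 w) (norm_nonneg _)
      _ = C * ∫ w, ‖extScore u w b‖ ∂G := integral_const_mul C _
  -- P x · is integrable
  have hPxInt : Integrable (fun z => scoreProjKernel u Jstar x z) G := by
    have hfe : (fun z => scoreProjKernel u Jstar x z)
        = fun z => ∑ b, ∑ c, (extScore u x b * Jstar⁻¹ b c) * extScore u z c := rfl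
    rw [hfe]
    exact integrable_finset_sum _ fun b _ =>
      integrable_finset_sum _ fun c _ => (heInt c).const_mul _
  have hPφ : ∀ b : Fin (p + 1),
      Integrable (fun z => scoreProjKernel u Jstar x z
        * ∫ w, K z w * extScore u w b ∂G) G := by
    intro b
    have h := hPxInt.bdd_mul (hφM b) (c := C * ∫ w, ‖extScore u w b‖ ∂G) (Filter.Eventually.of_forall fun z0 => hφbd b z0)
    exact h.congr (Filter.Eventually.of_forall fun z0 => mul_comm _ _)
  -- Third term: pointwise expansion
  have hC3 : ∀ y : S, (∫ z, K x z * scoreProjKernel u Jstar z y ∂G)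
      = ∑ b, ∑ c, (∫ z, K x z * extScore u z b ∂G) * Jstar⁻¹ b c * extScore u y c := by
    intro y
    have h1 : (fun z => K x z * scoreProjKernel u Jstar z y)
        = fun z => ∑ b, ∑ c,
            (K x z * extScore u z b) * (Jstar⁻¹ b c * extScore u y c) := by
      funext z
      simp only [scoreProjKernel, Finset.mul_sum]
      exact Finset.sum_congr rfl fun b _ => Finset.sum_congr rfl fun c _ => by ring
    rw [h1, integral_finset_sum _ (fun b _ =>
      integrable_finset_sum _ fun c _ => (hKe x b).mul_const _)]
    refine Finset.sum_congr rfl fun b _ => ?_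
    rw [integral_finset_sum _ (fun c _ => (hKe x b).mul_const _)]
    refine Finset.sum_congr rfl fun c _ => ?_
    rw [integral_mul_const]; ring
  have h1C : (fun y => (∫ z, K x z * scoreProjKernel u Jstar z y ∂G) * extScore u y i)
      = fun y => (∑ b, ∑ c, (∫ z, K x z * extScore u z b ∂G) * Jstar⁻¹ b c
          * extScore u y c) * extScore u y i := funext fun y => by rw [hC3 y]
  have IC : Integrable (fun y =>
      (∫ z, K x z * scoreProjKernel u Jstar z y ∂G) * extScore u y i) G := by
    rw [h1C]; exact hkeyInt _ i
  have hT3 : ∫ y, (∫ z, K x z * scoreProjKernel u Jstar z y ∂G) * extScore u y i ∂G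
      = ∫ z, K x z * extScore u z i ∂G := by
    rw [h1C]; exact hkey _ i
  -- Fourth term: pointwise expansion (two stages)
  have hDinner : ∀ z y : S,
      (∫ w, scoreProjKernel u Jstar x z * K z w * scoreProjKernel u Jstar w y ∂G)
      = ∑ b, ∑ c, (scoreProjKernel u Jstar x z * ∫ w, K z w * extScore u w b ∂G)
          * (Jstar⁻¹ b c * extScore u y c) := by
    intro z y
    have h1 : ∀ A : ℝ, (fun w => A * K z w * scoreProjKernel u Jstar w y)
        = fun w => ∑ b, ∑ c,
            (A * (K z w * extScore u w b)) * (Jstar⁻¹ b c * extScore u y c) := by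
      intro A; funext w
      simp only [scoreProjKernel, Finset.mul_sum]
      exact Finset.sum_congr rfl fun b _ => Finset.sum_congr rfl fun c _ => by ring
    rw [h1 (scoreProjKernel u Jstar x z),
      integral_finset_sum _ (fun b _ => integrable_finset_sum _ fun c _ =>
        ((hKe z b).const_mul _).mul_const _)]
    refine Finset.sum_congr rfl fun b _ => ?_
    rw [integral_finset_sum _ (fun c _ => ((hKe z b).const_mul _).mul_const _)]
    refine Finset.sum_congr rfl fun c _ => ?_
    rw [integral_mul_const, integral_const_mul]
  have hD : ∀ y : S,
      (∫ z, ∫ w, scoreProjKernel u Jstar x z * K z w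
        * scoreProjKernel u Jstar w y ∂G ∂G)
      = ∑ b, ∑ c, (∫ z, scoreProjKernel u Jstar x z
          * ∫ w, K z w * extScore u w b ∂G ∂G) * Jstar⁻¹ b c * extScore u y c := by
    intro y
    have h1 : (fun z => ∫ w, scoreProjKernel u Jstar x z * K z w
          * scoreProjKernel u Jstar w y ∂G)
        = fun z => ∑ b, ∑ c, (scoreProjKernel u Jstar x z
            * ∫ w, K z w * extScore u w b ∂G)
            * (Jstar⁻¹ b c * extScore u y c) := funext fun z => hDinner z y
    rw [h1, integral_finset_sum _ (fun b _ =>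
      integrable_finset_sum _ fun c _ => (hPφ b).mul_const _)]
    refine Finset.sum_congr rfl fun b _ => ?_
    rw [integral_finset_sum _ (fun c _ => (hPφ b).mul_const _)]
    refine Finset.sum_congr rfl fun c _ => ?_
    rw [integral_mul_const]; ring
  have h1D : (fun y => (∫ z, ∫ w, scoreProjKernel u Jstar x z * K z w
        * scoreProjKernel u Jstar w y ∂G ∂G) * extScore u y i)
      = fun y => (∑ b, ∑ c, (∫ z, scoreProjKernel u Jstar x z
          * ∫ w, K z w * extScore u w b ∂G ∂G) * Jstar⁻¹ b c * extScore u y c)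
          * extScore u y i := funext fun y => by rw [hD y]
  have ID : Integrable (fun y => (∫ z, ∫ w, scoreProjKernel u Jstar x z * K z w
      * scoreProjKernel u Jstar w y ∂G ∂G) * extScore u y i) G := by
    rw [h1D]; exact hkeyInt _ i
  have hT4 : ∫ y, (∫ z, ∫ w, scoreProjKernel u Jstar x z * K z w
        * scoreProjKernel u Jstar w y ∂G ∂G) * extScore u y i ∂G
      = ∫ z, scoreProjKernel u Jstar x z * ∫ w, K z w * extScore u w i ∂G ∂G := by
    rw [h1D]; exact hkey _ i
  -- Second term via Fubini
  have Hprod : Integrable (Function.uncurry fun y z =>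
      scoreProjKernel u Jstar x z * K z y * extScore u y i) (G.prod G) := by
    have base : Integrable (fun q : S × S =>
        extScore u q.1 i * scoreProjKernel u Jstar x q.2) (G.prod G) :=
      (heInt i).mul_prod hPxInt
    have hKm : AEStronglyMeasurable (fun q : S × S => K q.2 q.1) (G.prod G) :=
      (hKmeas.comp measurable_swap).aestronglyMeasurable
    have h := base.bdd_mul hKm (Filter.Eventually.of_forall fun q => hCnorm q.2 q.1)
    exact h.congr (Filter.Eventually.of_forall fun q => by
      simp only [Function.uncurry]; ring)
  have IB : Integrable (fun y =>
      (∫ z, scoreProjKernel u Jstar x z * K z y ∂G) * extScore u y i) G := by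
    have h := Hprod.integral_prod_left
    refine h.congr (Filter.Eventually.of_forall fun y => ?_)
    simp only [Function.uncurry]
    rw [← integral_mul_const]
  have hT2 : ∫ y, (∫ z, scoreProjKernel u Jstar x z * K z y ∂G) * extScore u y i ∂G
      = ∫ z, scoreProjKernel u Jstar x z * ∫ w, K z w * extScore u w i ∂G ∂G := by
    have e1 : (fun y => (∫ z, scoreProjKernel u Jstar x z * K z y ∂G) * extScore u y i)
        = fun y => ∫ z, scoreProjKernel u Jstar x z * K z y * extScore u y i ∂G := by
      funext y; rw [← integral_mul_const]
    rw [e1, integral_integral_swap Hprod]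
    refine integral_congr_ae (Filter.Eventually.of_forall fun z => ?_)
    calc ∫ y, scoreProjKernel u Jstar x z * K z y * extScore u y i ∂G
        = ∫ y, scoreProjKernel u Jstar x z * (K z y * extScore u y i) ∂G := by
          simp_rw [mul_assoc]
      _ = scoreProjKernel u Jstar x z * ∫ w, K z w * extScore u w i ∂G :=
          integral_const_mul _ _
  -- assemble
  have hsplit : (fun y => scoreCenteredKernel G u Jstar K x y * extScore u y i)
      = fun y => K x y * extScore u y i
        - (∫ z, scoreProjKernel u Jstar x z * K z y ∂G) * extScore u y i
        - (∫ z, K x z * scoreProjKernel u Jstar z y ∂G) * extScore u y i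
        + (∫ z, ∫ w, scoreProjKernel u Jstar x z * K z w
            * scoreProjKernel u Jstar w y ∂G ∂G) * extScore u y i :=
    funext fun y => by simp only [scoreCenteredKernel]; ring
  have I12 : Integrable (fun y => K x y * extScore u y i
      - (∫ z, scoreProjKernel u Jstar x z * K z y ∂G) * extScore u y i) G := IA.sub IB
  have I123 : Integrable (fun y => K x y * extScore u y i
      - (∫ z, scoreProjKernel u Jstar x z * K z y ∂G) * extScore u y i
      - (∫ z, K x z * scoreProjKernel u Jstar z y ∂G) * extScore u y i) G := I12.sub IC
  rw [hsplit, integral_add I123 ID, integral_sub I12 IC, integral_sub IA IB, hT2, hT3, hT4]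
  ring
end

section
/- Let R be a positive integer and let (γ_i)_{i∈ℕ} be a sequence of nonnegative reals with Σ_i γ_i² = 1 and Σ_i γ_i = √R. Then for every integer r ≥ 3, Σ_i γ_i^r ≥ R^{1 − r/2}, i.e. Σ_i γ_i^r ≥ R · (1/√R)^r. -/
/-- Jensen's inequality for `tsum` with subprobability weights. -/
lemma tsum_jensen_pow (w z : ℕ → ℝ) (n : ℕ) (hn : 1 ≤ n)
    (hw : ∀ i, 0 ≤ w i) (hz : ∀ i, 0 ≤ z i)
    (hsw : Summable w) (hw1 : ∑' i, w i ≤ 1)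
    (hswz : Summable (fun i => w i * z i))
    (hswzn : Summable (fun i => w i * z i ^ n)) :
    (∑' i, w i * z i) ^ n ≤ ∑' i, w i * z i ^ n := by
  have hRHS : (0:ℝ) ≤ ∑' i, w i * z i ^ n :=
    tsum_nonneg fun i => mul_nonneg (hw i) (pow_nonneg (hz i) n)
  have hbound : ∀ s : Finset ℕ, (∑ i ∈ s, w i * z i) ^ n ≤ ∑' i, w i * z i ^ n := by
    intro s
    set W := ∑ i ∈ s, w i with hW
    have hWnn : 0 ≤ W := Finset.sum_nonneg fun i _ => hw i
    have hRHSs : (0:ℝ) ≤ ∑ i ∈ s, w i * z i ^ n :=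
      Finset.sum_nonneg fun i _ => mul_nonneg (hw i) (pow_nonneg (hz i) n)
    have hle : (∑ i ∈ s, w i * z i ^ n) ≤ ∑' i, w i * z i ^ n :=
      Summable.sum_le_tsum s (fun i _ => mul_nonneg (hw i) (pow_nonneg (hz i) n)) hswzn
    rcases eq_or_lt_of_le hWnn with hW0 | hWpos
    · have hall : ∀ i ∈ s, w i = 0 :=
        (Finset.sum_eq_zero_iff_of_nonneg (fun i _ => hw i)).mp hW0.symm
      have hz0 : (∑ i ∈ s, w i * z i) = 0 :=
        Finset.sum_eq_zero fun i hi => by rw [hall i hi, zero_mul]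
      rw [hz0, zero_pow (by omega)]
      exact le_trans hRHSs hle
    · have hW1 : W ≤ 1 := le_trans (Summable.sum_le_tsum s (fun i _ => hw i) hsw) hw1
      have hjen := Real.pow_arith_mean_le_arith_mean_pow s (fun i => w i / W) z
        (fun i _ => div_nonneg (hw i) hWnn)
        (by rw [← Finset.sum_div, div_self hWpos.ne'])
        (fun i _ => hz i) n
      have e1 : (∑ i ∈ s, w i / W * z i) = (∑ i ∈ s, w i * z i) / W := by
        rw [Finset.sum_div]; exact Finset.sum_congr rfl fun i _ => by ring
      have e2 : (∑ i ∈ s, w i / W * z i ^ n) = (∑ i ∈ s, w i * z i ^ n) / W := by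
        rw [Finset.sum_div]; exact Finset.sum_congr rfl fun i _ => by ring
      rw [e1, e2, div_pow, div_le_div_iff₀ (pow_pos hWpos n) hWpos] at hjen
      -- hjen : (∑ wz)^n * W ≤ (∑ wz^n) * W^n
      have hpow : W ^ n ≤ W := by
        calc W ^ n = W ^ (n-1) * W := by
              rw [← pow_succ]; congr 1; omega
          _ ≤ 1 * W := mul_le_mul_of_nonneg_right (pow_le_one₀ hWnn hW1) hWnn
          _ = W := one_mul _
      have key : (∑ i ∈ s, w i * z i) ^ n * W ≤ (∑ i ∈ s, w i * z i ^ n) * W := by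
        calc (∑ i ∈ s, w i * z i) ^ n * W ≤ (∑ i ∈ s, w i * z i ^ n) * W ^ n := hjen
          _ ≤ (∑ i ∈ s, w i * z i ^ n) * W := mul_le_mul_of_nonneg_left hpow hRHSs
      have := le_of_mul_le_mul_right key hWpos
      exact le_trans this hle
  have htend : Filter.Tendsto (fun s : Finset ℕ => (∑ i ∈ s, w i * z i) ^ n)
      Filter.atTop (nhds ((∑' i, w i * z i) ^ n)) :=
    ((continuous_pow n).continuousAt).tendsto.comp hswz.hasSum
  exact le_of_tendsto htend (Filter.Eventually.of_forall hbound)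

/-- if `(γ_i)` are nonnegative with `Σ γ_i² = 1` and `Σ γ_i = √R` for a
positive integer `R`, then for every integer `r ≥ 3`, `Σ γ_i^r ≥ R · (1/√R)^r = R^{1-r/2}`. -/
theorem chi_star_cumulant_lower_bound (R : ℕ) (hR : 0 < R) (γ : ℕ → ℝ)
    (h0 : ∀ i, 0 ≤ γ i)
    (hs2 : Summable fun i => (γ i) ^ 2) (h2 : (∑' i, (γ i) ^ 2) = 1)
    (hs1 : Summable γ) (h1 : (∑' i, γ i) = Real.sqrt R) :
    ∀ r : ℕ, 3 ≤ r → (R : ℝ) * (1 / Real.sqrt R) ^ r ≤ ∑' i, (γ i) ^ r := by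
  intro r hr
  set S := Real.sqrt R with hS
  have hSpos : 0 < S := Real.sqrt_pos.mpr (by exact_mod_cast hR)
  have hS2 : S ^ 2 = R := Real.sq_sqrt (by positivity)
  -- each γ i ≤ 1
  have hle1 : ∀ i, γ i ≤ 1 := by
    intro i
    have : γ i ^ 2 ≤ 1 := h2 ▸ Summable.le_tsum hs2 i (fun j _ => sq_nonneg _)
    nlinarith [h0 i]
  -- summability of γ^r
  have hsr : Summable fun i => (γ i) ^ r :=
    hs2.of_nonneg_of_le (fun i => pow_nonneg (h0 i) r)
      (fun i => pow_le_pow_of_le_one (h0 i) (hle1 i) (by omega))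
  -- apply Jensen with weights γ/S, values γ, exponent r-1
  have hjen := tsum_jensen_pow (fun i => γ i / S) γ (r - 1) (by omega)
    (fun i => div_nonneg (h0 i) hSpos.le) h0
    (hs1.div_const S)
    (by rw [tsum_div_const, h1]; exact le_of_eq (div_self hSpos.ne'))
    (by simpa [div_mul_eq_mul_div, ← pow_two] using hs2.div_const S)
    (by
      have : (fun i => γ i / S * γ i ^ (r-1)) = fun i => γ i ^ r / S := by
        funext i
        rw [div_mul_eq_mul_div, ← pow_succ']
        congr 2
        omega
      rw [this]; exact hsr.div_const S)
  have e1 : (∑' i, γ i / S * γ i) = 1 / S := by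
    have : (fun i => γ i / S * γ i) = fun i => γ i ^ 2 / S := by
      funext i; rw [div_mul_eq_mul_div, ← pow_two]
    rw [this, tsum_div_const, h2]
  have e2 : (∑' i, γ i / S * γ i ^ (r-1)) = (∑' i, γ i ^ r) / S := by
    have : (fun i => γ i / S * γ i ^ (r-1)) = fun i => γ i ^ r / S := by
      funext i
      rw [div_mul_eq_mul_div, ← pow_succ']
      congr 2
      omega
    rw [this, tsum_div_const]
  rw [e1, e2] at hjen
  -- hjen : (1/S)^(r-1) ≤ (∑' γ^r) / S
  have : S * (1/S) ^ (r-1) ≤ ∑' i, γ i ^ r := by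
    rw [← le_div_iff₀' hSpos]
    exact hjen
  calc (R:ℝ) * (1/S) ^ r = S * (1/S) ^ (r-1) := by
        rw [← hS2]
        have : r = (r - 1) + 1 := by omega
        rw [this, pow_succ]
        rw [Nat.add_sub_cancel, pow_one, pow_succ, mul_comm ((1/S)^(r-1)), ← mul_assoc, mul_assoc S S,
          mul_one_div_cancel hSpos.ne', mul_one]
    _ ≤ ∑' i, γ i ^ r := this
end
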